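/- Let G be an ordinary unweighted graph on n vertices with minimum degree d_min ≥ 1. Then for any δ ∈ (0,1), the number of eigenvalues of the normalized Laplacian N = D^{-1/2} L D^{-1/2} that are at most 1-δ is at most n/(δ² d_min). -/

import Mathlib

open Matrix

lemma dp_sum_right' {n m : ℕ} (x : Fin n → ℝ) (g : Fin m → Fin n → ℝ) :
    x ⬝ᵥ (∑ a, g a) = ∑ a, x ⬝ᵥ g a := by
  simp only [dotProduct, Finset.sum_apply, Finset.mul_sum]
  rw [Finset.sum_comm]

lemma dp_sum_left' {n m : ℕ} (x : Fin n → ℝ) (g : Fin m → Fin n → ℝ) :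
    (∑ a, g a) ⬝ᵥ x = ∑ a, g a ⬝ᵥ x := by
  simp only [dotProduct, Finset.sum_apply, Finset.sum_mul]
  rw [Finset.sum_comm]

lemma bessel_aux' {n m : ℕ} (f : Fin m → (Fin n → ℝ))
    (horth : ∀ a a', f a ⬝ᵥ f a' = if a = a' then 1 else 0)
    (x : Fin n → ℝ) : ∑ a, (x ⬝ᵥ f a) ^ 2 ≤ x ⬝ᵥ x := by
  set s : Fin n → ℝ := ∑ a, (x ⬝ᵥ f a) • f a with hs
  have hxs : x ⬝ᵥ s = ∑ a, (x ⬝ᵥ f a) ^ 2 := by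
    rw [hs, dp_sum_right']
    refine Finset.sum_congr rfl fun a _ => ?_
    rw [dotProduct_smul, smul_eq_mul, sq]
  have hsx : s ⬝ᵥ x = ∑ a, (x ⬝ᵥ f a) ^ 2 := by
    rw [dotProduct_comm, hxs]
  have hss : s ⬝ᵥ s = ∑ a, (x ⬝ᵥ f a) ^ 2 := by
    rw [hs, dp_sum_left']
    refine Finset.sum_congr rfl fun a _ => ?_
    rw [smul_dotProduct, ← hs, smul_eq_mul, hs, dp_sum_right']
    rw [Finset.sum_eq_single a]
    · rw [dotProduct_smul, horth, if_pos rfl, smul_eq_mul, mul_one, sq]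
    · intro b _ hb
      rw [dotProduct_smul, horth, if_neg (Ne.symm hb), smul_eq_mul, mul_zero]
    · intro h; exact absurd (Finset.mem_univ a) h
  have h0 : (0:ℝ) ≤ (x - s) ⬝ᵥ (x - s) :=
    Finset.sum_nonneg fun i _ => mul_self_nonneg _
  rw [sub_dotProduct, dotProduct_sub, dotProduct_sub, hxs, hsx, hss] at h0
  linarith

/-- For an unweighted graph on `n` vertices with minimum degree `d_min ≥ 1`, the number
of eigenvalues of the normalized Laplacian that are at most `1 - δ` (counted with
multiplicity, i.e. via an orthonormal family of eigenvectors) is at most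
`n/(δ² d_min)`. -/
theorem stmt9 {n : ℕ} (G : SimpleGraph (Fin n)) [DecidableRel G.Adj]
    (dmin : ℕ) (hdmin : 1 ≤ dmin) (hdeg : ∀ u, dmin ≤ G.degree u)
    (δ : ℝ) (hδ0 : 0 < δ) (hδ1 : δ < 1)
    (N : Matrix (Fin n) (Fin n) ℝ)
    (hN : N = Matrix.diagonal (fun u => 1 / Real.sqrt (G.degree u)) *
        (Matrix.diagonal (fun u => (G.degree u : ℝ)) - G.adjMatrix ℝ) *
        Matrix.diagonal (fun u => 1 / Real.sqrt (G.degree u)))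
    {m : ℕ} (f : Fin m → (Fin n → ℝ)) (μ : Fin m → ℝ)
    (horth : ∀ a a', f a ⬝ᵥ f a' = if a = a' then 1 else 0)
    (heig : ∀ a, N.mulVec (f a) = μ a • f a)
    (hμ : ∀ a, μ a ≤ 1 - δ) :
    (m : ℝ) ≤ n / (δ ^ 2 * dmin) := by
  have hdpos : ∀ u, (0:ℝ) < (G.degree u : ℝ) := fun u => by
    have : 1 ≤ G.degree u := le_trans hdmin (hdeg u)
    exact_mod_cast Nat.lt_of_lt_of_le Nat.zero_lt_one this
  have hsq : ∀ u, Real.sqrt (G.degree u) * Real.sqrt (G.degree u) = (G.degree u : ℝ) :=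
    fun u => Real.mul_self_sqrt (le_of_lt (hdpos u))
  have hspos : ∀ u, (0:ℝ) < Real.sqrt (G.degree u) := fun u =>
    Real.sqrt_pos.mpr (hdpos u)
  set M : Matrix (Fin n) (Fin n) ℝ := 1 - N with hM
  -- eigen property for M
  have hMeig : ∀ a, M.mulVec (f a) = (1 - μ a) • f a := by
    intro a
    rw [hM, sub_mulVec, one_mulVec, heig, sub_smul, one_smul]
  have hdmpos : (0:ℝ) < (dmin : ℝ) := by exact_mod_cast hdmin
  -- entries of M
  have hMentry : ∀ u v, M u v = if G.Adj u v then
      1 / (Real.sqrt (G.degree u) * Real.sqrt (G.degree v)) else 0 := by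
    intro u v
    have hNe : N u v = (1 / Real.sqrt (G.degree u)) *
        ((if u = v then ((G.degree u : ℝ)) else 0) - (if G.Adj u v then 1 else 0)) *
        (1 / Real.sqrt (G.degree v)) := by
      rw [hN, Matrix.mul_diagonal, Matrix.diagonal_mul, Matrix.sub_apply,
        SimpleGraph.adjMatrix_apply, Matrix.diagonal_apply]
    have hMval : M u v = (if u = v then (1:ℝ) else 0) - N u v := by
      rw [hM, Matrix.sub_apply, Matrix.one_apply]
    have h1 : Real.sqrt (G.degree u) ≠ 0 := (hspos u).ne'
    have h2 : Real.sqrt (G.degree v) ≠ 0 := (hspos v).ne'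
    rw [hMval, hNe]
    by_cases huv : u = v
    · subst huv
      rw [if_pos rfl, if_pos rfl, if_neg G.irrefl, if_neg G.irrefl]
      have key : (1:ℝ) / Real.sqrt (G.degree u) * ((G.degree u : ℝ) - 0) *
          (1 / Real.sqrt (G.degree u)) = 1 := by
        rw [sub_zero]
        field_simp
        rw [sq, hsq u]
      rw [key]
      norm_num
    · rw [if_neg huv, if_neg huv]
      by_cases hadj : G.Adj u v
      · rw [if_pos hadj, if_pos hadj]
        field_simp
        ring
      · rw [if_neg hadj, if_neg hadj]
        ring
  -- squared entries bound
  have hM2 : ∀ u v, (M u v) ^ 2 ≤ (if G.Adj u v then (1:ℝ) else 0) * (1 / ((G.degree u : ℝ) * dmin)) := by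
    intro u v
    rw [hMentry]
    by_cases hadj : G.Adj u v
    · simp only [hadj, if_true, one_mul]
      rw [div_pow, one_pow, mul_pow, sq, sq, hsq u, hsq v]
      apply div_le_div_of_nonneg_left one_pos.le
      · exact mul_pos (hdpos u) hdmpos
      · apply mul_le_mul_of_nonneg_left _ (le_of_lt (hdpos u))
        exact_mod_cast hdeg v
    · simp [hadj]
  -- row sums of adjacency indicators
  have hrow : ∀ u, ∑ v, (if G.Adj u v then (1:ℝ) else 0) = (G.degree u : ℝ) := by
    intro u
    rw [Finset.sum_boole]
    congr 1
    rw [SimpleGraph.degree, SimpleGraph.neighborFinset_eq_filter]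
  -- Frobenius norm bound
  have hfrob : ∑ u, ∑ v, (M u v) ^ 2 ≤ (n : ℝ) / dmin := by
    have h1 : ∀ u, ∑ v, (M u v) ^ 2 ≤ 1 / (dmin : ℝ) := by
      intro u
      calc ∑ v, (M u v) ^ 2
          ≤ ∑ v, (if G.Adj u v then (1:ℝ) else 0) * (1 / ((G.degree u : ℝ) * dmin)) :=
            Finset.sum_le_sum fun v _ => hM2 u v
        _ = (G.degree u : ℝ) * (1 / ((G.degree u : ℝ) * dmin)) := by
            rw [← Finset.sum_mul, hrow]
        _ = 1 / (dmin : ℝ) := by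
            have h2 : ((G.degree u:ℝ)) ≠ 0 := (hdpos u).ne'
            have h3 : ((dmin:ℝ)) ≠ 0 := hdmpos.ne'
            field_simp
    calc ∑ u, ∑ v, (M u v) ^ 2 ≤ ∑ _u : Fin n, 1 / (dmin : ℝ) :=
          Finset.sum_le_sum fun u _ => h1 u
      _ = (n : ℝ) / dmin := by
          rw [Finset.sum_const, Finset.card_univ, Fintype.card_fin, nsmul_eq_mul, mul_one_div]
  -- sum of squared eigenvalues bound via Bessel
  have hδa : ∀ a, δ ^ 2 ≤ (1 - μ a) ^ 2 := by
    intro a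
    have h : δ ≤ 1 - μ a := by linarith [hμ a]
    exact pow_le_pow_left₀ hδ0.le h 2
  have heignorm : ∀ a, (M.mulVec (f a)) ⬝ᵥ (M.mulVec (f a)) = (1 - μ a) ^ 2 := by
    intro a
    rw [hMeig, smul_dotProduct, dotProduct_smul, horth, if_pos rfl]
    simp [sq]
  have hsum : ∑ a, (1 - μ a) ^ 2 ≤ ∑ u, ∑ v, (M u v) ^ 2 := by
    have hlhs : ∑ a, (1 - μ a) ^ 2 = ∑ u, ∑ a, ((fun v => M u v) ⬝ᵥ f a) ^ 2 := by
      rw [Finset.sum_comm]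
      refine Finset.sum_congr rfl fun a _ => ?_
      rw [← heignorm a]
      simp only [dotProduct, Matrix.mulVec]
      exact Finset.sum_congr rfl fun u _ => (sq _).symm
    rw [hlhs]
    apply Finset.sum_le_sum
    intro u _
    calc ∑ a, ((fun v => M u v) ⬝ᵥ f a) ^ 2 ≤ (fun v => M u v) ⬝ᵥ (fun v => M u v) :=
          bessel_aux' f horth _
      _ = ∑ v, (M u v) ^ 2 := Finset.sum_congr rfl fun v _ => (sq _).symm
  have hmain : (m : ℝ) * δ ^ 2 ≤ (n : ℝ) / dmin := by
    calc (m : ℝ) * δ ^ 2 = ∑ _a : Fin m, δ ^ 2 := by simp [mul_comm]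
      _ ≤ ∑ a, (1 - μ a) ^ 2 := Finset.sum_le_sum fun a _ => hδa a
      _ ≤ ∑ u, ∑ v, (M u v) ^ 2 := hsum
      _ ≤ (n : ℝ) / dmin := hfrob
  rw [le_div_iff₀ (by positivity)]
  calc (m : ℝ) * (δ ^ 2 * dmin) = ((m : ℝ) * δ ^ 2) * dmin := by ring
    _ ≤ ((n : ℝ) / dmin) * dmin := mul_le_mul_of_nonneg_right hmain hdmpos.le
    _ = n := by field_simp
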